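/- Let V be a vector space of dimension n = C(s+1,2) over a field K (s ≥ 2, n ≥ 3). Then all non-degenerate alternating trilinear forms on V possessing a 2-singular subspace of codimension s form a single orbit under the action of GL(V). -/

import Mathlib

set_option linter.unusedSectionVars false
set_option linter.deprecated false
set_option maxHeartbeats 1000000

open Module

namespace Stmt15Aux

variable {K V : Type*} [Field K] [AddCommGroup V] [Module K V]

section Toolkit

lemma upd0 (x y z t : V) : Function.update ![x,y,z] 0 t = ![t,y,z] := by
  ext i; fin_cases i <;> simp [Function.update]

lemma upd1 (x y z t : V) : Function.update ![x,y,z] 1 t = ![x,t,z] := by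
  ext i; fin_cases i <;> simp [Function.update]

lemma upd2 (x y z t : V) : Function.update ![x,y,z] 2 t = ![x,y,t] := by
  ext i; fin_cases i <;> simp [Function.update]

variable (f : AlternatingMap K V K (Fin 3))

lemma add0 (x x' y z : V) : f ![x+x',y,z] = f ![x,y,z] + f ![x',y,z] := by
  have := f.toMultilinearMap.map_update_add ![x,y,z] 0 x x'
  simpa [upd0] using this

lemma add1 (x y y' z : V) : f ![x,y+y',z] = f ![x,y,z] + f ![x,y',z] := by
  have := f.toMultilinearMap.map_update_add ![x,y,z] 1 y y'
  simpa [upd1] using this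

lemma add2 (x y z z' : V) : f ![x,y,z+z'] = f ![x,y,z] + f ![x,y,z'] := by
  have := f.toMultilinearMap.map_update_add ![x,y,z] 2 z z'
  simpa [upd2] using this

lemma smul0 (c : K) (x y z : V) : f ![c • x,y,z] = c * f ![x,y,z] := by
  have := f.toMultilinearMap.map_update_smul ![x,y,z] 0 c x
  simpa [upd0] using this

lemma smul1 (c : K) (x y z : V) : f ![x,c • y,z] = c * f ![x,y,z] := by
  have := f.toMultilinearMap.map_update_smul ![x,y,z] 1 c y
  simpa [upd1] using this

lemma smul2 (c : K) (x y z : V) : f ![x,y,c • z] = c * f ![x,y,z] := by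
  have := f.toMultilinearMap.map_update_smul ![x,y,z] 2 c z
  simpa [upd2] using this

lemma zero0 (y z : V) : f ![0,y,z] = 0 :=
  f.toMultilinearMap.map_coord_zero (m := ![0,y,z]) 0 rfl

lemma zero1 (x z : V) : f ![x,0,z] = 0 :=
  f.toMultilinearMap.map_coord_zero (m := ![x,0,z]) 1 rfl

lemma zero2 (x y : V) : f ![x,y,0] = 0 :=
  f.toMultilinearMap.map_coord_zero (m := ![x,y,0]) 2 rfl

lemma swap01 (x y z : V) : f ![y,x,z] = - f ![x,y,z] := by
  have h : (![x,y,z] ∘ Equiv.swap (0:Fin 3) 1) = ![y,x,z] := by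
    ext i; fin_cases i <;> simp [Equiv.swap_apply_def]
  have := f.map_swap ![x,y,z] (i := 0) (j := 1) (by decide)
  rwa [h] at this

lemma swap12 (x y z : V) : f ![x,z,y] = - f ![x,y,z] := by
  have h : (![x,y,z] ∘ Equiv.swap (1:Fin 3) 2) = ![x,z,y] := by
    ext i; fin_cases i <;> simp [Equiv.swap_apply_def]
  have := f.map_swap ![x,y,z] (i := 1) (j := 2) (by decide)
  rwa [h] at this

lemma swap02 (x y z : V) : f ![z,y,x] = - f ![x,y,z] := by
  have h : (![x,y,z] ∘ Equiv.swap (0:Fin 3) 2) = ![z,y,x] := by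
    ext i; fin_cases i <;> simp [Equiv.swap_apply_def]
  have := f.map_swap ![x,y,z] (i := 0) (j := 2) (by decide)
  rwa [h] at this

lemma cyc (x y z : V) : f ![z,x,y] = f ![x,y,z] := by
  rw [swap01, swap12]; ring

lemma eq01 (x z : V) : f ![x,x,z] = 0 :=
  f.map_eq_zero_of_eq ![x,x,z] (i := 0) (j := 1) rfl (by decide)

lemma eq02 (x y : V) : f ![x,y,x] = 0 :=
  f.map_eq_zero_of_eq ![x,y,x] (i := 0) (j := 2) rfl (by decide)

lemma eq12 (x y : V) : f ![x,y,y] = 0 :=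
  f.map_eq_zero_of_eq ![x,y,y] (i := 1) (j := 2) rfl (by decide)

lemma sum0 {α : Type*} (t : Finset α) (g : α → V) (y z : V) :
    f ![∑ a ∈ t, g a, y, z] = ∑ a ∈ t, f ![g a, y, z] := by
  classical
  induction t using Finset.induction with
  | empty => simpa using zero0 f y z
  | insert _ _ h ih => rename_i a t'
                       rw [Finset.sum_insert h, Finset.sum_insert h, add0, ih]

lemma sum1 {α : Type*} (t : Finset α) (g : α → V) (x z : V) :
    f ![x, ∑ a ∈ t, g a, z] = ∑ a ∈ t, f ![x, g a, z] := by
  classical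
  induction t using Finset.induction with
  | empty => simpa using zero1 f x z
  | insert _ _ h ih => rename_i a t'
                       rw [Finset.sum_insert h, Finset.sum_insert h, add1, ih]

lemma sum2 {α : Type*} (t : Finset α) (g : α → V) (x y : V) :
    f ![x, y, ∑ a ∈ t, g a] = ∑ a ∈ t, f ![x, y, g a] := by
  classical
  induction t using Finset.induction with
  | empty => simpa using zero2 f x y
  | insert _ _ h ih => rename_i a t'
                       rw [Finset.sum_insert h, Finset.sum_insert h, add2, ih]

end Toolkit

lemma sorted_to_all {ι : Type*} [LinearOrder ι] (f g : AlternatingMap K V K (Fin 3))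
    (x y : ι → V)
    (h : ∀ i j k : ι, i < j → j < k → f ![x i, x j, x k] = g ![y i, y j, y k]) :
    ∀ i j k : ι, f ![x i, x j, x k] = g ![y i, y j, y k] := by
  intro i j k
  rcases lt_trichotomy i j with hij | rfl | hij
  · rcases lt_trichotomy j k with hjk | rfl | hjk
    · exact h i j k hij hjk
    · rw [eq12, eq12]
    · rcases lt_trichotomy i k with hik | rfl | hik
      · rw [swap12 f (x i) (x k) (x j), swap12 g (y i) (y k) (y j), h i k j hik hjk]
      · rw [eq02, eq02]
      · rw [cyc f (x j) (x k) (x i), cyc g (y j) (y k) (y i),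
          cyc f (x k) (x i) (x j), cyc g (y k) (y i) (y j), h k i j hik hij]
  · rw [eq01, eq01]
  · rcases lt_trichotomy i k with hik | rfl | hik
    · rw [swap01 f (x j) (x i) (x k), swap01 g (y j) (y i) (y k), h j i k hij hik]
    · rw [eq02, eq02]
    · rcases lt_trichotomy j k with hjk | rfl | hjk
      · rw [cyc f (x j) (x k) (x i), cyc g (y j) (y k) (y i), h j k i hjk hik]
      · rw [eq12, eq12]
      · rw [swap02 f (x k) (x j) (x i), swap02 g (y k) (y j) (y i), h k j i hjk hij]

abbrev PairIdx (s : ℕ) := {p : Lex (Fin s × Fin s) // (ofLex p).1 < (ofLex p).2}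
abbrev Idx (s : ℕ) := Lex (PairIdx s ⊕ Fin s)

lemma cardPair (s : ℕ) : Fintype.card (PairIdx s) = s.choose 2 := by
  have e : PairIdx s ≃ Σ j : Fin s, {i : Fin s // (i:ℕ) < (j:ℕ)} := by
    refine ⟨fun p => ⟨(ofLex p.1).2, (ofLex p.1).1, p.2⟩,
      fun q => ⟨toLex (q.2.1, q.1), q.2.2⟩, fun p => ?_, fun q => ?_⟩
    · ext <;> rfl
    · rfl
  rw [Fintype.card_congr e, Fintype.card_sigma]
  have h1 : ∀ j : Fin s, Fintype.card {i : Fin s // (i:ℕ) < (j:ℕ)} = (j:ℕ) := fun j =>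
    Fintype.card_fin_lt_of_le j.2.le
  simp_rw [h1]
  rw [show (∑ x : Fin s, (x:ℕ)) = ∑ i ∈ Finset.range s, i from Fin.sum_univ_eq_sum_range (fun i => i) s,
    Finset.sum_range_id, Nat.choose_two_right]

variable (K) in
def model (s : ℕ) (i j k : Idx s) : K :=
  match ofLex i, ofLex j, ofLex k with
  | Sum.inl p, Sum.inr a, Sum.inr b => if ofLex p.val = (a, b) then 1 else 0
  | _, _, _ => 0

lemma exists_good_basis [FiniteDimensional K V] {s : ℕ}
    (hrank : finrank K V = (s+1).choose 2)
    (ω : AlternatingMap K V K (Fin 3))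
    (hnd : ∀ v : V, (∀ w x : V, ω ![v, w, x] = 0) → v = 0)
    (U : Submodule K V) (hUdim : finrank K U = s.choose 2)
    (hsing : ∀ u ∈ U, ∀ u' ∈ U, ∀ v : V, ω ![u, u', v] = 0) :
    ∃ b : Basis (Idx s) K V, ∀ i j k : Idx s, i < j → j < k →
      ω ![b i, b j, b k] = model K s i j k := by
  classical
  obtain ⟨W, hW⟩ := Submodule.exists_isCompl U
  have hadd := Submodule.finrank_add_eq_of_isCompl hW
  have hsum : (s+1).choose 2 = s.choose 2 + s := by
    rw [Nat.choose_succ_succ, Nat.choose_one_right, Nat.add_comm]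
  have hWdim : finrank K W = s := by omega
  let w0 : Basis (Fin s) K W := finBasisOfFinrankEq K W hWdim
  let wv : Fin s → V := fun i => (w0 i : V)
  -- the comparison map F
  let F : U →ₗ[K] (PairIdx s → K) := LinearMap.pi fun p =>
    { toFun := fun u => ω ![u.1, wv (ofLex p.1).1, wv (ofLex p.1).2]
      map_add' := fun u u' => by
        simp only [Submodule.coe_add]; exact add0 ω _ _ _ _
      map_smul' := fun c u => by
        simp only [Submodule.coe_smul, RingHom.id_apply]; exact smul0 ω _ _ _ _ }
  have hFapp : ∀ (u : U) (p : PairIdx s),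
      F u p = ω ![u.1, wv (ofLex p.1).1, wv (ofLex p.1).2] := fun u p => rfl
  have hFinj : Function.Injective F := by
    rw [← LinearMap.ker_eq_bot, LinearMap.ker_eq_bot']
    intro u hu
    have hu' : ∀ p : PairIdx s, ω ![u.1, wv (ofLex p.1).1, wv (ofLex p.1).2] = 0 := by
      intro p; rw [← hFapp u p, hu]; rfl
    have hall : ∀ a b : Fin s, ω ![u.1, wv a, wv b] = 0 := by
      intro a b
      rcases lt_trichotomy a b with hab | rfl | hab
      · exact hu' ⟨toLex (a,b), hab⟩
      · exact eq12 ω _ _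
      · rw [swap12 ω u.1 (wv b) (wv a)]
        exact neg_eq_zero.mpr (hu' ⟨toLex (b,a), hab⟩)
    have hzero : ∀ v x : V, ω ![u.1, v, x] = 0 := by
      have hdec : ∀ v : V, ∃ a ∈ U, ∃ wc : W, a + (wc : V) = v := by
        intro v
        have hv : v ∈ U ⊔ W := by rw [hW.sup_eq_top]; trivial
        obtain ⟨a, ha, b, hb, h⟩ := Submodule.mem_sup.mp hv
        exact ⟨a, ha, ⟨b, hb⟩, h⟩
      have hWexp : ∀ wc : W, (wc : V) = ∑ i, (w0.repr wc i) • wv i := by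
        intro wc
        conv_lhs => rw [← w0.sum_repr wc]
        push_cast [Submodule.coe_sum]
        rfl
      intro v x
      obtain ⟨a, ha, wa, rfl⟩ := hdec v
      obtain ⟨c, hc, wc, rfl⟩ := hdec x
      rw [add1, add2, add2]
      have t1 : ω ![u.1, a, c] = 0 := hsing u.1 u.2 a ha c
      have t2 : ω ![u.1, a, (wc:V)] = 0 := hsing u.1 u.2 a ha (wc:V)
      have t3 : ω ![u.1, (wa:V), c] = 0 := by
        rw [swap12 ω u.1 c (wa:V), hsing u.1 u.2 c hc (wa:V), neg_zero]
      have t4 : ω ![u.1, (wa:V), (wc:V)] = 0 := by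
        rw [hWexp wa, hWexp wc, sum1]
        apply Finset.sum_eq_zero
        intro i _
        rw [smul1, sum2]
        simp only [smul2, hall, mul_zero, Finset.sum_const_zero]
      rw [t1, t2, t3, t4]; ring
    exact Subtype.ext (hnd u.1 hzero)
  let E : U ≃ₗ[K] (PairIdx s → K) :=
    LinearMap.linearEquivOfInjective F hFinj
      (by rw [hUdim, finrank_fintype_fun_eq_card, cardPair])
  have hEF : ∀ u : U, E u = F u := fun u => rfl
  let bU : Basis (PairIdx s) K U := (Pi.basisFun K (PairIdx s)).map E.symm
  have hFbU : ∀ p : PairIdx s, F (bU p) = Pi.single p 1 := by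
    intro p
    have h1 : bU p = E.symm (Pi.single p 1) := by
      simp [bU, Basis.map_apply, Pi.basisFun_apply]
    rw [h1, ← hEF, E.apply_symm_apply]
  have hUW : ∀ (p : PairIdx s) (a b : Fin s), a < b →
      ω ![(bU p).1, wv a, wv b] = (if ofLex p.1 = (a,b) then (1:K) else 0) := by
    intro p a b hab
    have h1 := congrFun (hFbU p) ⟨toLex (a,b), hab⟩
    rw [hFapp] at h1
    have h2 : ((⟨toLex (a,b), hab⟩ : PairIdx s) = p) ↔ (ofLex p.1 = (a,b)) := by
      constructor
      · rintro rfl; rfl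
      · intro h; apply Subtype.ext
        exact (congrArg toLex h).symm
    rw [Pi.single_apply] at h1
    rw [show (![(bU p).1, wv a, wv b]) = ![(bU p).1, wv (ofLex (toLex (a,b))).1, wv (ofLex (toLex (a,b))).2] from rfl]
    rw [h1, if_congr h2 rfl rfl]
  -- combined basis
  let eUW := Submodule.prodEquivOfIsCompl U W hW
  let b0 : Basis (PairIdx s ⊕ Fin s) K V := (bU.prod w0).map eUW
  have hb0l : ∀ p, b0 (Sum.inl p) = (bU p : V) := by
    intro p
    simp [b0, Module.Basis.map_apply, Module.Basis.prod_apply, eUW, Submodule.coe_prodEquivOfIsCompl]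
  have hb0r : ∀ i, b0 (Sum.inr i) = wv i := by
    intro i
    simp [b0, Module.Basis.map_apply, Module.Basis.prod_apply, eUW, Submodule.coe_prodEquivOfIsCompl, wv]
  let b1 : Basis (Idx s) K V := b0.reindex (toLex : (PairIdx s ⊕ Fin s) ≃ Idx s)
  have hb1 : ∀ x, b1 (toLex x) = b0 x := by
    intro x; simp [b1, Basis.reindex_apply]
  -- corrections
  let γ : Fin s → Fin s → Fin s → K := fun i j k => ω ![wv i, wv j, wv k]
  let cc : Fin s → PairIdx s → K := fun k p =>
    if k < (ofLex p.1).1 then -γ k (ofLex p.1).1 (ofLex p.1).2 else 0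
  let dU : Fin s → U := fun k => ∑ p, cc k p • bU p
  let dv : Fin s → V := fun k => (dU k : V)
  have hdvU : ∀ k, dv k ∈ U := fun k => (dU k).2
  have hdv : ∀ k, dv k = ∑ p, cc k p • (bU p : V) := by
    intro k
    simp [dv, dU, Submodule.coe_sum]
  let w' : Fin s → V := fun k => wv k + dv k
  have hdω : ∀ (k a b : Fin s) (hab : a < b),
      ω ![dv k, wv a, wv b] = cc k ⟨toLex (a,b), hab⟩ := by
    intro k a b hab
    rw [hdv, sum0]
    have h1 : ∀ p : PairIdx s, ω ![cc k p • (bU p : V), wv a, wv b]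
        = cc k p * (if ofLex p.1 = (a,b) then (1:K) else 0) := by
      intro p; rw [smul0, hUW p a b hab]
    simp_rw [h1]
    have h2 : ∀ p : PairIdx s, (ofLex p.1 = (a,b)) ↔ (p = ⟨toLex (a,b), hab⟩) := by
      intro p
      constructor
      · intro h; apply Subtype.ext; exact (congrArg toLex h)
      · rintro rfl; rfl
    simp_rw [h2]
    simp [Finset.sum_ite_eq']
  -- automorphism sending b1 to the corrected basis
  let A : V →ₗ[K] V := b1.constr K fun i => Sum.elim (fun p => (bU p : V)) w' (ofLex i)
  let A' : V →ₗ[K] V := b1.constr K fun i =>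
    Sum.elim (fun p => (bU p : V)) (fun k => wv k - dv k) (ofLex i)
  have hAl : ∀ p, A (bU p : V) = (bU p : V) := by
    intro p
    have h := b1.constr_basis K (fun i => Sum.elim (fun p => (bU p : V)) w' (ofLex i))
      (toLex (Sum.inl p))
    rw [hb1, hb0l] at h
    exact h
  have hAr : ∀ k, A (wv k) = w' k := by
    intro k
    have h := b1.constr_basis K (fun i => Sum.elim (fun p => (bU p : V)) w' (ofLex i))
      (toLex (Sum.inr k))
    rw [hb1, hb0r] at h
    exact h
  have hA'l : ∀ p, A' (bU p : V) = (bU p : V) := by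
    intro p
    have h := b1.constr_basis K
      (fun i => Sum.elim (fun p => (bU p : V)) (fun k => wv k - dv k) (ofLex i))
      (toLex (Sum.inl p))
    rw [hb1, hb0l] at h
    exact h
  have hA'r : ∀ k, A' (wv k) = wv k - dv k := by
    intro k
    have h := b1.constr_basis K
      (fun i => Sum.elim (fun p => (bU p : V)) (fun k => wv k - dv k) (ofLex i))
      (toLex (Sum.inr k))
    rw [hb1, hb0r] at h
    exact h
  have hAd : ∀ k, A (dv k) = dv k := by
    intro k
    conv_lhs => rw [hdv k, map_sum]
    simp_rw [map_smul, hAl]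
    exact (hdv k).symm
  have hA'd : ∀ k, A' (dv k) = dv k := by
    intro k
    conv_lhs => rw [hdv k, map_sum]
    simp_rw [map_smul, hA'l]
    exact (hdv k).symm
  have hAA' : A ∘ₗ A' = LinearMap.id := by
    apply b1.ext
    intro i
    obtain ⟨x, rfl⟩ := (toLex : (PairIdx s ⊕ Fin s) ≃ Idx s).surjective i
    rcases x with p | k
    · rw [LinearMap.comp_apply, hb1, hb0l, hA'l, hAl, LinearMap.id_apply]
    · rw [LinearMap.comp_apply, hb1, hb0r, hA'r, map_sub, hAr, hAd, LinearMap.id_apply]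
      simp [w']
  have hA'A : A' ∘ₗ A = LinearMap.id := by
    apply b1.ext
    intro i
    obtain ⟨x, rfl⟩ := (toLex : (PairIdx s ⊕ Fin s) ≃ Idx s).surjective i
    rcases x with p | k
    · rw [LinearMap.comp_apply, hb1, hb0l, hAl, hA'l, LinearMap.id_apply]
    · rw [LinearMap.comp_apply, hb1, hb0r, hAr, LinearMap.id_apply]
      show A' (wv k + dv k) = wv k
      rw [map_add, hA'r, hA'd]
      abel
  let G : V ≃ₗ[K] V := LinearEquiv.ofLinear A A' hAA' hA'A
  let b : Basis (Idx s) K V := b1.map G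
  have hbl : ∀ p, b (toLex (Sum.inl p)) = (bU p : V) := by
    intro p
    rw [Basis.map_apply, hb1, hb0l]
    exact hAl p
  have hbr : ∀ k, b (toLex (Sum.inr k)) = w' k := by
    intro k
    rw [Basis.map_apply, hb1, hb0r]
    exact hAr k
  refine ⟨b, ?_⟩
  intro i j k hij hjk
  obtain ⟨x, rfl⟩ := (toLex : (PairIdx s ⊕ Fin s) ≃ Idx s).surjective i
  obtain ⟨y, rfl⟩ := (toLex : (PairIdx s ⊕ Fin s) ≃ Idx s).surjective j
  obtain ⟨z, rfl⟩ := (toLex : (PairIdx s ⊕ Fin s) ≃ Idx s).surjective k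
  rcases x with p | a <;> rcases y with q | bb <;> rcases z with r | c
  · -- lll
    rw [hbl, hbl, hbl]
    exact hsing _ (bU p).2 _ (bU q).2 _
  · -- llr
    rw [hbl, hbl, hbr]
    exact hsing _ (bU p).2 _ (bU q).2 _
  · exact absurd hjk Sum.Lex.not_inr_lt_inl
  · -- lrr
    have hbc : bb < c := Sum.Lex.inr_lt_inr_iff.mp hjk
    rw [hbl, hbr, hbr]
    show ω ![(bU p : V), wv bb + dv bb, wv c + dv c] = _
    rw [add1, add2, add2]
    have t2 : ω ![(bU p : V), wv bb, dv c] = 0 := by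
      rw [swap12 ω _ (dv c) (wv bb), hsing _ (bU p).2 _ (hdvU c) _, neg_zero]
    have t3 : ω ![(bU p : V), dv bb, wv c] = 0 := hsing _ (bU p).2 _ (hdvU bb) _
    have t4 : ω ![(bU p : V), dv bb, dv c] = 0 := hsing _ (bU p).2 _ (hdvU bb) _
    rw [t2, t3, t4, hUW p bb c hbc]
    show _ = model K s (toLex (Sum.inl p)) (toLex (Sum.inr bb)) (toLex (Sum.inr c))
    show (if ofLex p.1 = (bb, c) then (1:K) else 0) + 0 + (0 + 0) = _
    rw [add_zero, add_zero, add_zero]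
    rfl
  · exact absurd hij Sum.Lex.not_inr_lt_inl
  · exact absurd hij Sum.Lex.not_inr_lt_inl
  · exact absurd hjk Sum.Lex.not_inr_lt_inl
  · -- rrr
    have hab : a < bb := Sum.Lex.inr_lt_inr_iff.mp hij
    have hbc : bb < c := Sum.Lex.inr_lt_inr_iff.mp hjk
    rw [hbr, hbr, hbr]
    show ω ![wv a + dv a, wv bb + dv bb, wv c + dv c] = _
    rw [add0, add1, add1, add2, add2, add2, add2]
    have t2 : ω ![wv a, wv bb, dv c] = 0 := by
      rw [← cyc ω (wv a) (wv bb) (dv c)]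
      rw [hdω c a bb hab]
      simp only [cc]
      rw [if_neg]
      intro hca
      exact absurd (lt_trans (lt_trans hca hab) hbc) (lt_irrefl c)
    have t3 : ω ![wv a, dv bb, wv c] = 0 := by
      rw [swap01 ω (dv bb) (wv a) (wv c), hdω bb a c (lt_trans hab hbc)]
      simp only [cc]
      rw [if_neg, neg_zero]
      intro hba
      exact absurd (lt_trans hba hab) (lt_irrefl bb)
    have t4 : ω ![wv a, dv bb, dv c] = 0 := by
      rw [cyc ω (dv bb) (dv c) (wv a)]
      exact hsing _ (hdvU bb) _ (hdvU c) _
    have t5 : ω ![dv a, wv bb, wv c] = -γ a bb c := by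
      rw [hdω a bb c hbc]
      show (if a < bb then -γ a bb c else 0) = -γ a bb c
      rw [if_pos hab]
    have t6 : ω ![dv a, wv bb, dv c] = 0 := by
      rw [swap12 ω (dv a) (dv c) (wv bb), hsing _ (hdvU a) _ (hdvU c) _, neg_zero]
    have t7 : ω ![dv a, dv bb, wv c] = 0 := hsing _ (hdvU a) _ (hdvU bb) _
    have t8 : ω ![dv a, dv bb, dv c] = 0 := hsing _ (hdvU a) _ (hdvU bb) _
    rw [t2, t3, t4, t5, t6, t7, t8]
    show γ a bb c + 0 + (0 + 0) + (-γ a bb c + 0 + (0 + 0)) = model K s _ _ _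
    have : model K s (toLex (Sum.inr a : PairIdx s ⊕ Fin s)) (toLex (Sum.inr bb)) (toLex (Sum.inr c)) = 0 := rfl
    rw [this]; ring

end Stmt15Aux

/-- Let `dim V = n = C(s+1,2)` with `s ≥ 2`, `n ≥ 3`.  Then all
non-degenerate alternating trilinear forms on `V` possessing a 2-singular
subspace of codimension `s` lie in a single `GL(V)`-orbit: any two such forms are
related by a linear automorphism of `V`. -/
theorem stmt15 {K V : Type*} [Field K] [AddCommGroup V] [Module K V]
    [FiniteDimensional K V] {n s : ℕ} (hn : Module.finrank K V = n)
    (h3 : 3 ≤ n) (hs : 2 ≤ s) (hns : n = Nat.choose (s + 1) 2)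
    (ω ω' : AlternatingMap K V K (Fin 3))
    (hnd : ∀ v : V, (∀ w x : V, ω ![v, w, x] = 0) → v = 0)
    (hnd' : ∀ v : V, (∀ w x : V, ω' ![v, w, x] = 0) → v = 0)
    (hU : ∃ U : Submodule K V, Module.finrank K U = n - s ∧
      ∀ u ∈ U, ∀ u' ∈ U, ∀ v : V, ω ![u, u', v] = 0)
    (hU' : ∃ U : Submodule K V, Module.finrank K U = n - s ∧
      ∀ u ∈ U, ∀ u' ∈ U, ∀ v : V, ω' ![u, u', v] = 0) :
    ∃ g : V ≃ₗ[K] V, ∀ u v w : V, ω' ![u, v, w] = ω ![g u, g v, g w] := by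
  classical
  have hrank : Module.finrank K V = (s+1).choose 2 := by rw [hn, hns]
  have hsum : (s+1).choose 2 = s.choose 2 + s := by
    rw [Nat.choose_succ_succ, Nat.choose_one_right, Nat.add_comm]
  have hdimeq : n - s = s.choose 2 := by omega
  obtain ⟨U, hUdim, hUsing⟩ := hU
  obtain ⟨U', hUdim', hUsing'⟩ := hU'
  obtain ⟨b, hb⟩ := Stmt15Aux.exists_good_basis hrank ω hnd U
    (by rw [hUdim, hdimeq]) hUsing
  obtain ⟨b', hb'⟩ := Stmt15Aux.exists_good_basis hrank ω' hnd' U'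
    (by rw [hUdim', hdimeq]) hUsing'
  let g : V ≃ₗ[K] V := b'.equiv b (Equiv.refl _)
  have hg : ∀ i, g (b' i) = b i := fun i => by simp [g, Basis.equiv_apply]
  have key : ω' = ω.compLinearMap (g : V →ₗ[K] V) := by
    apply Basis.ext_alternating b'
    intro v _
    have hall := Stmt15Aux.sorted_to_all ω' (ω.compLinearMap (g : V →ₗ[K] V)) b' b' ?h
    · have e1 : (fun i => b' (v i)) = ![b' (v 0), b' (v 1), b' (v 2)] := by
        funext i; fin_cases i <;> rfl
      rw [e1]
      exact hall (v 0) (v 1) (v 2)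
    case h =>
      intro i j k hij hjk
      rw [AlternatingMap.compLinearMap_apply]
      have e2 : (fun t => (g : V →ₗ[K] V) (![b' i, b' j, b' k] t)) = ![b i, b j, b k] := by
        funext t; fin_cases t <;> simp [hg]
      rw [e2, hb' i j k hij hjk, hb i j k hij hjk]
  refine ⟨g, fun u v w => ?_⟩
  rw [key, AlternatingMap.compLinearMap_apply]
  congr 1
  funext t; fin_cases t <;> rfl
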